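/- Let γ > 1 and let α satisfy α > 0 or α < −γ. Fix p > 0, v ∈ ℝ, and two densities ρ₋, ρ₊ > 0 with ρ₋ ≠ ρ₊, and consider the pair of states (ρ₋, v, p), (ρ₊, v, p) (constant velocity and pressure). Suppose F = (Fρ, Fρv, Fρe) ∈ ℝ³ satisfies the pressure-equilibrium-preserving form Fρv = v·Fρ + p and Fρe = (1/2)v²·Fρ + (γ/(γ−1))·p·v, and is entropy conservative for Harten's entropy with parameter α, i.e. ⟦w⟧·F − ⟦ψ⟧ = 0 at this pair of states. Then the density component is given by Fρ = −(γ/α) · (⟦ρ^{α/(α+γ)}⟧ / ⟦ρ^{−γ/(α+γ)}⟧) · v, where ⟦ρ^s⟧ = ρ₊^s − ρ₋^s. -/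

import Mathlib

private lemma harten_split (γ α p ρ : ℝ) (hp : 0 < p) (hρ : 0 < ρ) :
    (p / ρ ^ γ) ^ (1 / (α + γ)) = p ^ (1 / (α + γ)) * ρ ^ (-γ / (α + γ)) := by
  rw [Real.div_rpow hp.le (Real.rpow_nonneg hρ.le γ), ← Real.rpow_mul hρ.le,
    div_eq_mul_inv, ← Real.rpow_neg hρ.le,
    show -(γ * (1 / (α + γ))) = -γ / (α + γ) by ring]


/-- First component of the entropy variables for Harten's entropy with
parameter `α` for the 1D compressible Euler equations (`γ` is the ratio of
specific heats). -/
noncomputable def hartenW1 (γ α ρ v p : ℝ) : ℝ :=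
  ρ / p * (p / ρ ^ γ) ^ (1 / (α + γ)) * (-(α / (γ - 1)) * (p / ρ) - v ^ 2 / 2)

/-- Second component of the entropy variables for Harten's entropy. -/
noncomputable def hartenW2 (γ α ρ v p : ℝ) : ℝ :=
  ρ / p * (p / ρ ^ γ) ^ (1 / (α + γ)) * v

/-- Third component of the entropy variables for Harten's entropy. -/
noncomputable def hartenW3 (γ α ρ v p : ℝ) : ℝ :=
  ρ / p * (p / ρ ^ γ) ^ (1 / (α + γ)) * (-1)

/-- Flux potential associated with Harten's entropy. -/
noncomputable def hartenPsi (γ α ρ v p : ℝ) : ℝ :=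
  ρ * (p / ρ ^ γ) ^ (1 / (α + γ)) * v

/-- Entropy conservation residual `⟦w⟧ ⬝ F - ⟦ψ⟧` of a numerical flux
`(Fρ, Fρv, Fρe)` at the pair of states `(ρm, vm, pm)`, `(ρp, vp, pp)`. -/
noncomputable def ecResidual (γ α ρm vm pm ρp vp pp Fρ Fρv Fρe : ℝ) : ℝ :=
  (hartenW1 γ α ρp vp pp - hartenW1 γ α ρm vm pm) * Fρ
    + (hartenW2 γ α ρp vp pp - hartenW2 γ α ρm vm pm) * Fρv
    + (hartenW3 γ α ρp vp pp - hartenW3 γ α ρm vm pm) * Fρe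
    - (hartenPsi γ α ρp vp pp - hartenPsi γ α ρm vm pm)

/-- **Lemma 2.1 of the paper.** For constant pressure and velocity, a numerical
flux of pressure-equilibrium-preserving form that is entropy conservative for
Harten's entropy with parameter `α` has density flux
`Fρ = -(γ/α) ⟦ρ^(α/(α+γ))⟧ / ⟦ρ^(-γ/(α+γ))⟧ ⋅ v`. -/
theorem density_flux_constant_pressure_velocity
    (γ α p v ρm ρp Fρ Fρv Fρe : ℝ)
    (hγ : 1 < γ) (hα : 0 < α ∨ α < -γ)
    (hp : 0 < p) (hρm : 0 < ρm) (hρp : 0 < ρp) (hρ : ρm ≠ ρp)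
    (hFρv : Fρv = v * Fρ + p)
    (hFρe : Fρe = 1 / 2 * v ^ 2 * Fρ + γ / (γ - 1) * p * v)
    (hec : ecResidual γ α ρm v p ρp v p Fρ Fρv Fρe = 0) :
    Fρ = -(γ / α) *
      ((ρp ^ (α / (α + γ)) - ρm ^ (α / (α + γ))) /
        (ρp ^ (-γ / (α + γ)) - ρm ^ (-γ / (α + γ)))) * v := by
  have hγ0 : (0:ℝ) < γ := lt_trans one_pos hγ
  have hαγ : α + γ ≠ 0 := by rcases hα with h | h <;> nlinarith
  have hα0 : α ≠ 0 := by rcases hα with h | h <;> nlinarith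
  have hγ1 : γ - 1 ≠ 0 := by nlinarith
  set e2 := -γ / (α + γ) with he2
  have he2ne : e2 ≠ 0 := by
    simp only [he2, div_ne_zero_iff]
    exact ⟨neg_ne_zero.mpr (ne_of_gt hγ0), hαγ⟩
  set q := p ^ (1 / (α + γ)) with hq
  have hqpos : 0 < q := Real.rpow_pos_of_pos hp _
  set C := ρm ^ e2 with hC
  set D := ρp ^ e2 with hD
  have hCpos : 0 < C := Real.rpow_pos_of_pos hρm _
  have hDpos : 0 < D := Real.rpow_pos_of_pos hρp _
  have hDC : D - C ≠ 0 := by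
    intro h
    apply hρ
    have hcd : C = D := by linarith [sub_eq_zero.mp h]
    have := congrArg (fun x => x ^ (1 / e2)) hcd
    simpa [hC, hD, ← Real.rpow_mul hρm.le, ← Real.rpow_mul hρp.le,
      mul_one_div, div_self he2ne, mul_inv_cancel₀ he2ne] using this
  have h1e2 : 1 + e2 = α / (α + γ) := by rw [he2]; field_simp; ring
  have hA : ρm ^ (α / (α + γ)) = ρm * C := by
    rw [hC, ← h1e2, Real.rpow_add hρm, Real.rpow_one]
  have hB : ρp ^ (α / (α + γ)) = ρp * D := by
    rw [hD, ← h1e2, Real.rpow_add hρp, Real.rpow_one]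
  have hsm : (p / ρm ^ γ) ^ (1 / (α + γ)) = q * C := harten_split γ α p ρm hp hρm
  have hsp : (p / ρp ^ γ) ^ (1 / (α + γ)) = q * D := harten_split γ α p ρp hp hρp
  rw [hA, hB]
  have h2 : ecResidual γ α ρm v p ρp v p Fρ Fρv Fρe
      = -(q / (γ - 1)) * (α * (D - C) * Fρ + γ * (ρp * D - ρm * C) * v) := by
    unfold ecResidual hartenW1 hartenW2 hartenW3 hartenPsi
    rw [hsm, hsp, hFρv, hFρe]
    field_simp
    ring
  rw [h2] at hec
  have key : α * (D - C) * Fρ + γ * (ρp * D - ρm * C) * v = 0 := by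
    rcases mul_eq_zero.mp hec with h | h
    · exfalso
      have h1 : (0:ℝ) < γ - 1 := by linarith
      have h2' : 0 < q / (γ - 1) := div_pos hqpos h1
      rw [neg_eq_zero] at h
      exact absurd h (ne_of_gt h2')
    · exact h
  have hαD : α * (D - C) ≠ 0 := mul_ne_zero hα0 hDC
  field_simp
  linear_combination key
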